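/- Let g: ℝⁿ → ℝ ∪ {+∞} be a lower semicontinuous function with dom g unbounded, and let S := {x ∈ ℝⁿ : g(x) ≤ 0} be nonempty, closed and unbounded. Assume S has an error bound at infinity: there exist α > 0 and R > 0 such that d(x;S) ≤ α·max(g(x),0) for all x ∈ ℝⁿ with ‖x‖ > R. Then N(∞;S) ⊆ ⋃_{λ ≥ 0} λ∘∂g(∞), i.e., N(∞;S) ⊆ (⋃_{λ > 0} λ·∂g(∞)) ∪ ∂^∞g(∞). -/

import Mathlib

open Filter Topology Set Pointwise RealInnerProductSpace

noncomputable section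

variable {E : Type*} [NormedAddCommGroup E] [InnerProductSpace ℝ E]

/-- The Fréchet (regular) normal cone to `Ω` at `x`:
`{v | limsup_{y→x, y∈Ω} ⟪v, y-x⟫/‖y-x‖ ≤ 0}`, empty if `x ∉ Ω`. -/
def FrechetNormalCone (Ω : Set E) (x : E) : Set E :=
  {v | x ∈ Ω ∧ ∀ ε > (0:ℝ), ∀ᶠ y in 𝓝[Ω] x, ⟪v, y - x⟫ ≤ ε * ‖y - x‖}

/-- The limiting (Mordukhovich) normal cone to `Ω` at `x`. -/
def LimitingNormalCone (Ω : Set E) (x : E) : Set E :=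
  {v | ∃ xs vs : ℕ → E, (∀ k, vs k ∈ FrechetNormalCone Ω (xs k)) ∧
    Tendsto xs atTop (𝓝 x) ∧ Tendsto vs atTop (𝓝 v)}

/-- The normal cone to an unbounded set `Ω` at infinity. -/
def NormalConeAtInfty (Ω : Set E) : Set E :=
  {v | ∃ xs vs : ℕ → E, (∀ k, vs k ∈ FrechetNormalCone Ω (xs k)) ∧
    Tendsto (fun k => ‖xs k‖) atTop atTop ∧ Tendsto vs atTop (𝓝 v)}

/-- The epigraph of `f : E → ℝ ∪ {+∞}` as a subset of the (ℓ²-)product `E × ℝ`. -/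
def epiSet (f : E → EReal) : Set (WithLp 2 (E × ℝ)) :=
  {p | f (WithLp.equiv 2 (E × ℝ) p).1 ≤ ((WithLp.equiv 2 (E × ℝ) p).2 : EReal)}

/-- The point `(x, t)` of the (ℓ²-)product `E × ℝ`. -/
def mkP (x : E) (t : ℝ) : WithLp 2 (E × ℝ) := (WithLp.equiv 2 (E × ℝ)).symm (x, t)

/-- `𝒩(f)`: limits of limiting normals to `epi f` at points `(x_k, f(x_k))` with `‖x_k‖ → ∞`. -/
def NclAtInfty (f : E → EReal) : Set (E × ℝ) :=
  {q | ∃ (xs : ℕ → E) (ws : ℕ → WithLp 2 (E × ℝ)),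
    (∀ k, f (xs k) ≠ ⊤) ∧
    Tendsto (fun k => ‖xs k‖) atTop atTop ∧
    (∀ k, ws k ∈ LimitingNormalCone (epiSet f) (mkP (xs k) (f (xs k)).toReal)) ∧
    Tendsto (fun k => WithLp.equiv 2 (E × ℝ) (ws k)) atTop (𝓝 q)}

/-- The limiting subdifferential of `f` at infinity: `∂f(∞) = {u | (u,-1) ∈ 𝒩(f)}`. -/
def subInfty (f : E → EReal) : Set E := {u | (u, (-1 : ℝ)) ∈ NclAtInfty f}

/-- The singular subdifferential of `f` at infinity: `∂^∞f(∞) = {u | (u,0) ∈ 𝒩(f)}`. -/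
def singSubInfty (f : E → EReal) : Set E := {u | (u, (0 : ℝ)) ∈ NclAtInfty f}

/-- The singular subdifferential of `f` at a point `x ∈ dom f`:
`∂^∞f(x) = {v | (v,0) ∈ N((x,f(x)); epi f)}`, empty if `x ∉ dom f`. -/
def singSub (f : E → EReal) (x : E) : Set E :=
  {v | f x ≠ ⊤ ∧ mkP v 0 ∈ LimitingNormalCone (epiSet f) (mkP x (f x).toReal)}

/-- `λ∘∂f(∞)`: equals `λ • ∂f(∞)` for `λ ≠ 0` and `∂^∞f(∞)` for `λ = 0`. -/
def lamCirc (f : E → EReal) (lam : ℝ) : Set E :=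
  if lam = 0 then singSubInfty f else lam • subInfty f

/-- `f` is Lipschitz at infinity. -/
def LipschitzAtInfty (f : E → ℝ) : Prop :=
  ∃ L > (0:ℝ), ∃ R > (0:ℝ), ∀ x x' : E, R < ‖x‖ → R < ‖x'‖ → |f x - f x'| ≤ L * ‖x - x'‖

end

set_option linter.unusedSectionVars false

noncomputable section AuxLemmas

variable {E : Type*} [NormedAddCommGroup E] [InnerProductSpace ℝ E]

lemma aux_frechet_zero {Ω : Set E} {x : E} (hx : x ∈ Ω) : (0:E) ∈ FrechetNormalCone Ω x := by
  refine ⟨hx, fun ε hε => Eventually.of_forall fun y => ?_⟩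
  rw [inner_zero_left]
  positivity

lemma aux_frechet_smul {Ω : Set E} {x v : E} {c : ℝ} (hc : 0 < c)
    (h : v ∈ FrechetNormalCone Ω x) : c • v ∈ FrechetNormalCone Ω x := by
  refine ⟨h.1, fun ε hε => ?_⟩
  filter_upwards [h.2 (ε / c) (by positivity)] with y hy
  rw [real_inner_smul_left]
  calc c * ⟪v, y - x⟫ ≤ c * (ε / c * ‖y - x‖) := by
        exact mul_le_mul_of_nonneg_left hy hc.le
    _ = ε * ‖y - x‖ := by field_simp

lemma aux_frechet_le_limiting {Ω : Set E} {x v : E} (h : v ∈ FrechetNormalCone Ω x) :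
    v ∈ LimitingNormalCone Ω x :=
  ⟨fun _ => x, fun _ => v, fun _ => h, tendsto_const_nhds, tendsto_const_nhds⟩

lemma aux_frechet_quad {Ω : Set E} {p N : E} (hp : p ∈ Ω) {C ρ : ℝ} (hρ : 0 < ρ) (hC : 0 ≤ C)
    (h : ∀ q ∈ Ω, ‖q - p‖ ≤ ρ → ⟪N, q - p⟫ ≤ C * ‖q - p‖ ^ 2) :
    N ∈ FrechetNormalCone Ω p := by
  refine ⟨hp, fun ε hε => ?_⟩
  have hmem : ∀ᶠ q in 𝓝[Ω] p, q ∈ Ω := eventually_mem_nhdsWithin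
  have hball : ∀ᶠ q in 𝓝[Ω] p, dist q p < min ρ (ε / (C + 1)) := by
    apply eventually_nhdsWithin_of_eventually_nhds
    have : Metric.ball p (min ρ (ε / (C + 1))) ∈ 𝓝 p :=
      Metric.ball_mem_nhds _ (by positivity)
    exact eventually_of_mem this fun q hq => hq
  filter_upwards [hball, hmem] with q hq hqΩ
  have h1 : ‖q - p‖ ≤ ρ := by
    rw [← dist_eq_norm]
    exact (lt_of_lt_of_le hq (min_le_left _ _)).le
  have h3 : ‖q - p‖ ≤ ε / (C + 1) := by
    rw [← dist_eq_norm]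
    exact (lt_of_lt_of_le hq (min_le_right _ _)).le
  have h2 := h q hqΩ h1
  have hn : (0:ℝ) ≤ ‖q - p‖ := norm_nonneg _
  have hC1 : (0:ℝ) < C + 1 := by linarith
  have hd : C * (ε / (C + 1)) ≤ ε := by
    rw [mul_comm, div_mul_eq_mul_div, div_le_iff₀ hC1]
    nlinarith
  calc ⟪N, q - p⟫ ≤ C * ‖q - p‖ ^ 2 := h2
    _ ≤ ε * ‖q - p‖ := by
        nlinarith [mul_le_mul_of_nonneg_right (mul_le_mul_of_nonneg_left h3 hC) hn,
          mul_le_mul_of_nonneg_right hd hn]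

lemma aux_norm_sq_prod {p : WithLp 2 (E × ℝ)} : ‖p‖ ^ 2 = ‖p.fst‖ ^ 2 + p.snd ^ 2 := by
  rw [WithLp.prod_norm_sq_eq_of_L2, Real.norm_eq_abs, sq_abs]

lemma aux_norm_fst_le (p : WithLp 2 (E × ℝ)) : ‖p.fst‖ ≤ ‖p‖ := by
  have h := aux_norm_sq_prod (p := p)
  nlinarith [norm_nonneg p, norm_nonneg p.fst, sq_nonneg p.snd]

lemma aux_abs_snd_le (p : WithLp 2 (E × ℝ)) : |p.snd| ≤ ‖p‖ := by
  have h := aux_norm_sq_prod (p := p)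
  nlinarith [norm_nonneg p, abs_nonneg p.snd, sq_abs p.snd, sq_nonneg ‖p.fst‖]

lemma aux_inner_prod (p q : WithLp 2 (E × ℝ)) :
    ⟪p, q⟫ = ⟪p.fst, q.fst⟫ + p.snd * q.snd := by
  simp [WithLp.prod_inner_apply, RCLike.inner_apply, conj_trivial]
  ring

@[simp] lemma aux_mkP_fst (a : E) (b : ℝ) : (mkP a b).fst = a := rfl
@[simp] lemma aux_mkP_snd (a : E) (b : ℝ) : (mkP a b).snd = b := rfl

lemma aux_mem_epiSet {g : E → EReal} {p : WithLp 2 (E × ℝ)} :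
    p ∈ epiSet g ↔ g p.fst ≤ (p.snd : EReal) := Iff.rfl

lemma aux_isClosed_epiSet {g : E → EReal} (hg : LowerSemicontinuous g) :
    IsClosed (epiSet g) := by
  rw [← isOpen_compl_iff, isOpen_iff_mem_nhds]
  intro p hp
  rw [mem_compl_iff, aux_mem_epiSet, not_le] at hp
  obtain ⟨c, hc1, hc2⟩ := EReal.exists_between_coe_real hp
  have cf : Continuous (fun q : WithLp 2 (E × ℝ) => q.fst) :=
    continuous_fst.comp (WithLp.prodContinuousLinearEquiv 2 ℝ E ℝ).continuous
  have cs : Continuous (fun q : WithLp 2 (E × ℝ) => q.snd) :=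
    continuous_snd.comp (WithLp.prodContinuousLinearEquiv 2 ℝ E ℝ).continuous
  have h1 : ∀ᶠ q in 𝓝 p, (c : EReal) < g q.fst :=
    (cf.continuousAt (x := p)).eventually (hg p.fst (c : EReal) hc2)
  have h2 : ∀ᶠ q in 𝓝 p, q.snd < c := by
    have hpc : p.snd < c := by exact_mod_cast hc1
    exact (cs.continuousAt (x := p)).eventually (eventually_lt_nhds hpc)
  filter_upwards [h1, h2] with q ha hb
  rw [mem_compl_iff, aux_mem_epiSet, not_le]
  exact lt_trans (by exact_mod_cast hb) ha

lemma aux_young (c A d : ℝ) (hc : 0 < c) : A * |d| ≤ c * d ^ 2 + A ^ 2 / (4 * c) := by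
  have h4 : A ^ 2 / (4 * c) * (4 * c) = A ^ 2 := by field_simp
  nlinarith [sq_nonneg (2 * c * |d| - A), sq_abs d, hc, h4, mul_pos hc hc]

lemma aux_le_of_sq_le_sq {a b : ℝ} (ha : 0 ≤ a) (hb : 0 ≤ b) (h : a ^ 2 ≤ b ^ 2) : a ≤ b := by
  nlinarith

end AuxLemmas

noncomputable section Core

/-- The penalized objective used in the decoupled variational argument. -/
def corePhi {n : ℕ} (v x : EuclideanSpace ℝ (Fin n)) (A clam kap : ℝ)
    (q : (WithLp 2 (EuclideanSpace ℝ (Fin n) × ℝ)) × ℝ) : ℝ :=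
  -⟪v, q.1.fst - x⟫ + A * max q.2 0 + clam * (q.1.snd - q.2) ^ 2
    + kap * (‖q.1.fst - x‖ ^ 2 + q.1.snd ^ 2)

lemma corePhi_def {n : ℕ} (v x : EuclideanSpace ℝ (Fin n)) (A clam kap : ℝ)
    (q : (WithLp 2 (EuclideanSpace ℝ (Fin n) × ℝ)) × ℝ) :
    corePhi v x A clam kap q =
      -⟪v, q.1.fst - x⟫ + A * max q.2 0 + clam * (q.1.snd - q.2) ^ 2
        + kap * (‖q.1.fst - x‖ ^ 2 + q.1.snd ^ 2) := rfl

set_option maxHeartbeats 2000000 in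
lemma coreK {n : ℕ} (g : EuclideanSpace ℝ (Fin n) → EReal)
    (hg : LowerSemicontinuous g) (hgbot : ∀ x, g x ≠ ⊥)
    (S : Set (EuclideanSpace ℝ (Fin n)))
    (hSne : S.Nonempty) (hScl : IsClosed S)
    (α R : ℝ) (hα : 0 < α)
    (heb : ∀ (z : EuclideanSpace ℝ (Fin n)) (s' : ℝ), g z ≤ (s' : EReal) → R < ‖z‖ →
      Metric.infDist z S ≤ α * max s' 0)
    (x : EuclideanSpace ℝ (Fin n)) (hxS : x ∈ S) (hgx : g x ≤ 0) (hxR : R + 1 < ‖x‖)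
    (v : EuclideanSpace ℝ (Fin n)) (hv : ‖v‖ = 1) (hvN : v ∈ FrechetNormalCone S x)
    (ε : ℝ) (hε : 0 < ε) (hε1 : ε ≤ 1) :
    ∃ (y : EuclideanSpace ℝ (Fin n)) (N : WithLp 2 (EuclideanSpace ℝ (Fin n) × ℝ)),
      ‖y - x‖ ≤ 1 ∧ g y ≠ ⊤ ∧
      N ∈ FrechetNormalCone (epiSet g) (mkP y (g y).toReal) ∧
      ‖N.fst - v‖ ≤ 16 * ε ∧ N.snd ≤ 16 * ε ∧ -(6 * α) - 16 * ε ≤ N.snd := by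
  classical
  -- Fréchet inequality with radius δ
  have h2 := hvN.2 ε hε
  rw [eventually_nhdsWithin_iff, Metric.eventually_nhds_iff] at h2
  obtain ⟨δ, hδ, hF⟩ := h2
  have hFrech : ∀ y ∈ S, ‖y - x‖ < δ → ⟪v, y - x⟫ ≤ ε * ‖y - x‖ := by
    intro y hy hyx
    exact hF (by rwa [dist_eq_norm]) hy
  -- parameters
  obtain ⟨r, hr_def⟩ : ∃ r : ℝ, r = min δ 1 / (2 + 2 * α) := ⟨_, rfl⟩
  have hden : (0:ℝ) < 2 + 2 * α := by linarith
  have hrpos : 0 < r := by rw [hr_def]; exact div_pos (lt_min hδ one_pos) hden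
  have hr1 : r ≤ 1 := by
    rw [hr_def, div_le_one hden]
    calc min δ 1 ≤ 1 := min_le_right _ _
      _ ≤ 2 + 2 * α := by linarith
  have hrδ : r + α * r < δ := by
    have h1 : r + α * r = min δ 1 / 2 := by
      rw [hr_def]
      field_simp
    rw [h1]
    have := min_le_left δ 1
    linarith
  obtain ⟨A, hA_def⟩ : ∃ A : ℝ, A = α * (1 + ε) := ⟨_, rfl⟩
  have hApos : 0 < A := by rw [hA_def]; positivity
  have hA2 : A ≤ 2 * α := by rw [hA_def]; nlinarith
  obtain ⟨clam, hclam_def⟩ : ∃ c : ℝ, c = A ^ 2 / (2 * ε * r) := ⟨_, rfl⟩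
  have hclam : 0 < clam := by rw [hclam_def]; positivity
  obtain ⟨kap, hkap_def⟩ : ∃ k : ℝ, k = 32 * ε / r := ⟨_, rfl⟩
  have hkap : 0 < kap := by rw [hkap_def]; positivity
  obtain ⟨B, hB_def⟩ : ∃ B : ℝ, B = r + A / (2 * clam) + 1 := ⟨_, rfl⟩
  have he2c : 0 < A / (2 * clam) := by positivity
  have hBpos : 0 < B := by rw [hB_def]; positivity
  have hrB : r ≤ B := by rw [hB_def]; linarith
  -- the key error-bound consequence
  have hP : ∀ (y : EuclideanSpace ℝ (Fin n)) (s : ℝ), g y ≤ (s : EReal) →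
      ‖y - x‖ ≤ r → |s| ≤ r → ⟪v, y - x⟫ ≤ ε * ‖y - x‖ + A * max s 0 := by
    intro y s hys hyr hsr
    have hyR : R < ‖y‖ := by
      have h1 : ‖x‖ - ‖y‖ ≤ ‖x - y‖ := norm_sub_norm_le x y
      rw [norm_sub_rev] at h1
      linarith
    have hmax_s : (0:ℝ) ≤ max s 0 := le_max_right s 0
    have hms_r : max s 0 ≤ r := max_le (le_trans (le_abs_self s) hsr) hrpos.le
    have hd : Metric.infDist y S ≤ α * max s 0 := heb y s hys hyR
    obtain ⟨p, hpS, hpd⟩ := hScl.exists_infDist_eq_dist hSne y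
    have hpy : ‖y - p‖ ≤ α * max s 0 := by
      rw [← dist_eq_norm, ← hpd]
      exact hd
    have hαms : α * max s 0 ≤ α * r := mul_le_mul_of_nonneg_left hms_r hα.le
    have hpx : ‖p - x‖ < δ := by
      have ht : dist p x ≤ dist p y + dist y x := dist_triangle p y x
      rw [dist_eq_norm, dist_eq_norm, dist_eq_norm, norm_sub_rev p y] at ht
      linarith
    have h3 := hFrech p hpS hpx
    have hsplit : ⟪v, y - x⟫ = ⟪v, p - x⟫ + ⟪v, y - p⟫ := by
      rw [← inner_add_right]
      congr 1
      abel
    have hCS : ⟪v, y - p⟫ ≤ ‖y - p‖ := by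
      calc ⟪v, y - p⟫ ≤ ‖v‖ * ‖y - p‖ := real_inner_le_norm v (y - p)
        _ = ‖y - p‖ := by rw [hv, one_mul]
    have hpx2 : ‖p - x‖ ≤ ‖y - x‖ + α * max s 0 := by
      have ht : dist p x ≤ dist p y + dist y x := dist_triangle p y x
      rw [dist_eq_norm, dist_eq_norm, dist_eq_norm, norm_sub_rev p y] at ht
      linarith
    have hεpx : ε * ‖p - x‖ ≤ ε * (‖y - x‖ + α * max s 0) :=
      mul_le_mul_of_nonneg_left hpx2 hε.le
    rw [hA_def]
    nlinarith [hsplit, h3, hCS, hpy, hεpx]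
  -- the compact minimization
  obtain ⟨pbar, hpbar_def⟩ :
      ∃ p : WithLp 2 (EuclideanSpace ℝ (Fin n) × ℝ), p = mkP x 0 := ⟨_, rfl⟩
  have hpbar_fst : pbar.fst = x := by rw [hpbar_def]; exact aux_mkP_fst x 0
  have hpbar_snd : pbar.snd = 0 := by rw [hpbar_def]; exact aux_mkP_snd x 0
  have hpbar : pbar ∈ epiSet g := by
    rw [aux_mem_epiSet, hpbar_fst, hpbar_snd]
    exact le_trans hgx (by norm_num)
  haveI : FiniteDimensional ℝ (WithLp 2 (EuclideanSpace ℝ (Fin n) × ℝ)) :=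
    by infer_instance
  haveI : ProperSpace (WithLp 2 (EuclideanSpace ℝ (Fin n) × ℝ)) := by infer_instance
  have hKcomp : IsCompact ((epiSet g ∩ Metric.closedBall pbar r) ×ˢ (Icc (-B) B)) :=
    ((isCompact_closedBall pbar r).inter_left (aux_isClosed_epiSet hg)).prod isCompact_Icc
  have cf : Continuous (fun p : WithLp 2 (EuclideanSpace ℝ (Fin n) × ℝ) => p.fst) :=
    continuous_fst.comp
      (WithLp.prodContinuousLinearEquiv 2 ℝ (EuclideanSpace ℝ (Fin n)) ℝ).continuous
  have cs : Continuous (fun p : WithLp 2 (EuclideanSpace ℝ (Fin n) × ℝ) => p.snd) :=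
    continuous_snd.comp
      (WithLp.prodContinuousLinearEquiv 2 ℝ (EuclideanSpace ℝ (Fin n)) ℝ).continuous
  have hcont : Continuous (corePhi v x A clam kap) := by
    unfold corePhi
    refine Continuous.add (Continuous.add (Continuous.add ?_ ?_) ?_) ?_
    · exact (Continuous.inner continuous_const ((cf.comp continuous_fst).sub continuous_const)).neg
    · exact continuous_const.mul (continuous_snd.max continuous_const)
    · exact continuous_const.mul (((cs.comp continuous_fst).sub continuous_snd).pow 2)
    · exact continuous_const.mul
        ((((cf.comp continuous_fst).sub continuous_const).norm.pow 2).add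
          ((cs.comp continuous_fst).pow 2))
  have hne : (pbar, (0:ℝ)) ∈ (epiSet g ∩ Metric.closedBall pbar r) ×ˢ (Icc (-B) B) := by
    refine ⟨⟨hpbar, Metric.mem_closedBall_self hrpos.le⟩, ?_, ?_⟩
    · show -B ≤ (0:ℝ)
      linarith
    · show (0:ℝ) ≤ B
      linarith
  obtain ⟨⟨phat, bhat⟩, hmemK, hminK⟩ :=
    hKcomp.exists_isMinOn ⟨_, hne⟩ hcont.continuousOn
  rw [isMinOn_iff] at hminK
  obtain ⟨⟨hpepi, hpball⟩, hbIcc⟩ := hmemK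
  dsimp only at hpepi hpball hbIcc
  have hpp : ‖phat - pbar‖ ≤ r := by
    rw [← dist_eq_norm]
    exact Metric.mem_closedBall.mp hpball
  have hyr : ‖phat.fst - x‖ ≤ r := by
    have h := aux_norm_fst_le (phat - pbar)
    rw [WithLp.sub_fst, hpbar_fst] at h
    exact le_trans h hpp
  have hsr : |phat.snd| ≤ r := by
    have h := aux_abs_snd_le (phat - pbar)
    rw [WithLp.sub_snd, hpbar_snd, sub_zero] at h
    exact le_trans h hpp
  -- value bound
  have hval : corePhi v x A clam kap (phat, bhat) ≤ 0 := by
    have h := hminK _ hne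
    have h0 : corePhi v x A clam kap (pbar, 0) = 0 := by
      rw [corePhi_def]
      dsimp only
      rw [hpbar_fst, hpbar_snd]
      simp
    linarith [h, h0.le, h0.ge]
  have hPs := hP phat.fst phat.snd (aux_mem_epiSet.mp hpepi) hyr hsr
  have hclam_val : A ^ 2 / (4 * clam) = ε * r / 2 := by
    rw [hclam_def]
    field_simp
    ring
  have hA1 : A * max phat.snd 0 - ε * r / 2 ≤
      A * max bhat 0 + clam * (phat.snd - bhat) ^ 2 := by
    have hmax1 : max phat.snd 0 ≤ max bhat 0 + |phat.snd - bhat| := by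
      apply max_le
      · have h1 : phat.snd - bhat ≤ |phat.snd - bhat| := le_abs_self _
        have h2 : bhat ≤ max bhat 0 := le_max_left _ _
        linarith
      · have := abs_nonneg (phat.snd - bhat)
        have h2 : (0:ℝ) ≤ max bhat 0 := le_max_right _ _
        linarith
    have hy := aux_young clam A (phat.snd - bhat) hclam
    rw [hclam_val] at hy
    linarith [mul_le_mul_of_nonneg_left hmax1 hApos.le, hy]
  have hκb : kap * (‖phat.fst - x‖ ^ 2 + phat.snd ^ 2) ≤ (3/2) * (ε * r) := by
    rw [corePhi_def] at hval
    dsimp only at hval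
    have hεr : ε * ‖phat.fst - x‖ ≤ ε * r := mul_le_mul_of_nonneg_left hyr hε.le
    linarith [hPs, hA1, hval, hεr]
  have hdist2 : ‖phat.fst - x‖ ^ 2 + phat.snd ^ 2 ≤ r ^ 2 * (3/64) := by
    have heq : kap * (r ^ 2 * (3/64)) = (3/2) * (ε * r) := by
      rw [hkap_def]
      field_simp
      ring
    have h := hκb.trans_eq heq.symm
    exact le_of_mul_le_mul_left h hkap
  have hy4 : ‖phat.fst - x‖ ≤ r / 4 := by
    apply aux_le_of_sq_le_sq (norm_nonneg _) (by positivity)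
    linarith [sq_nonneg r, sq_nonneg phat.snd]
  have hs4 : |phat.snd| ≤ r / 4 := by
    apply aux_le_of_sq_le_sq (abs_nonneg _) (by positivity)
    rw [sq_abs]
    linarith [sq_nonneg r, sq_nonneg ‖phat.fst - x‖]
  have hpp4 : ‖phat - pbar‖ ≤ r / 4 := by
    have h := aux_norm_sq_prod (p := phat - pbar)
    rw [WithLp.sub_fst, WithLp.sub_snd, hpbar_fst, hpbar_snd, sub_zero] at h
    apply aux_le_of_sq_le_sq (norm_nonneg _) (by positivity)
    rw [h]
    linarith [sq_nonneg r]
  -- optimality in the prox variable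
  have hopt_b : ∀ b ∈ Icc (-B) B,
      A * max bhat 0 + clam * (phat.snd - bhat) ^ 2 ≤
        A * max b 0 + clam * (phat.snd - b) ^ 2 := by
    intro b hb
    have h := hminK (phat, b) ⟨⟨hpepi, hpball⟩, hb⟩
    rw [corePhi_def, corePhi_def] at h
    dsimp only at h
    linarith
  have hsIcc : phat.snd ∈ Icc (-B) B := by
    have := abs_le.mp (le_trans hsr hrB)
    exact ⟨this.1, this.2⟩
  have hd0 : bhat ≤ phat.snd := by
    by_contra hlt
    push_neg at hlt
    have h := hopt_b phat.snd hsIcc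
    have hmono : max phat.snd 0 ≤ max bhat 0 := max_le_max hlt.le le_rfl
    have hsq : 0 < clam * ((phat.snd - bhat) * (phat.snd - bhat)) :=
      mul_pos hclam (mul_pos_of_neg_of_neg (by linarith) (by linarith))
    linarith [mul_le_mul_of_nonneg_left hmono hApos.le, hsq, h]
  have hdA : phat.snd - bhat ≤ A / (2 * clam) := by
    by_contra hlt
    push_neg at hlt
    obtain ⟨e, he_def⟩ : ∃ e : ℝ, e = A / (2 * clam) := ⟨_, rfl⟩
    rw [← he_def] at hlt
    have hepos : 0 < e := by rw [he_def]; positivity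
    have heA : 2 * clam * e = A := by
      rw [he_def]
      field_simp
    have hbB : (phat.snd - e) ∈ Icc (-B) B := by
      have h1 := abs_le.mp hsr
      constructor
      · have hBe : B = r + e + 1 := by rw [hB_def, he_def]
        rw [hBe]
        linarith [h1.1]
      · linarith [h1.2, hrB]
    have h := hopt_b _ hbB
    have hmono : max (phat.snd - e) 0 ≤ max bhat 0 + (phat.snd - e - bhat) := by
      apply max_le
      · linarith [le_max_left bhat 0]
      · have h2 : bhat ≤ phat.snd - e := by linarith
        linarith [le_max_right bhat 0]
    have hgt : (0:ℝ) < phat.snd - bhat - e := by linarith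
    have hsq : 0 < clam * ((phat.snd - bhat - e) * (phat.snd - bhat - e)) :=
      mul_pos hclam (mul_pos hgt hgt)
    have hAs : A * (phat.snd - e - bhat) = 2 * clam * e * (phat.snd - e - bhat) := by
      rw [heA]
    have hAe : A * e = 2 * clam * e * e := by rw [heA]
    linarith [mul_le_mul_of_nonneg_left hmono hApos.le, hAs, hAe, hsq, h]
  -- the candidate normal vector and the quadratic normal inequality
  obtain ⟨NV, hNV_def⟩ : ∃ N : WithLp 2 (EuclideanSpace ℝ (Fin n) × ℝ),
      N = mkP (v - (2 * kap) • (phat.fst - x))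
        (-(2 * clam * (phat.snd - bhat)) - 2 * kap * phat.snd) := ⟨_, rfl⟩
  have hNV_fst : NV.fst = v - (2 * kap) • (phat.fst - x) := by rw [hNV_def]; rfl
  have hNV_snd : NV.snd = -(2 * clam * (phat.snd - bhat)) - 2 * kap * phat.snd := by
    rw [hNV_def]; rfl
  have hNfst_bound : ‖NV.fst - v‖ ≤ 16 * ε := by
    rw [hNV_fst]
    have hee : v - (2 * kap) • (phat.fst - x) - v = -((2 * kap) • (phat.fst - x)) := by abel
    rw [hee, norm_neg, norm_smul, Real.norm_eq_abs, abs_of_pos (by positivity)]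
    have h := mul_le_mul_of_nonneg_left hy4 (le_of_lt (by positivity : (0:ℝ) < 2 * kap))
    calc 2 * kap * ‖phat.fst - x‖ ≤ 2 * kap * (r / 4) := h
      _ = 16 * ε := by rw [hkap_def]; field_simp; ring
  have h2clamd : 0 ≤ 2 * clam * (phat.snd - bhat) := by
    have h9 : 0 ≤ phat.snd - bhat := by linarith
    positivity
  have h2clamdA : 2 * clam * (phat.snd - bhat) ≤ A := by
    have h := mul_le_mul_of_nonneg_left hdA (le_of_lt (by positivity : (0:ℝ) < 2 * clam))
    calc 2 * clam * (phat.snd - bhat) ≤ 2 * clam * (A / (2 * clam)) := h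
      _ = A := by field_simp
  have h2kaps : |2 * kap * phat.snd| ≤ 16 * ε := by
    rw [abs_mul, abs_of_pos (by positivity : (0:ℝ) < 2 * kap)]
    have h := mul_le_mul_of_nonneg_left hs4 (le_of_lt (by positivity : (0:ℝ) < 2 * kap))
    calc 2 * kap * |phat.snd| ≤ 2 * kap * (r / 4) := h
      _ = 16 * ε := by rw [hkap_def]; field_simp; ring
  have hNsnd_ub : NV.snd ≤ 16 * ε := by
    rw [hNV_snd]
    have := abs_le.mp h2kaps
    linarith
  have hNsnd_lb : -(6 * α) - 16 * ε ≤ NV.snd := by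
    rw [hNV_snd]
    have := abs_le.mp h2kaps
    linarith
  have hquad : ∀ q ∈ epiSet g, ‖q - phat‖ ≤ r / 2 →
      ⟪NV, q - phat⟫ ≤ (clam + kap) * ‖q - phat‖ ^ 2 := by
    intro q hq hqr
    have hqball : q ∈ Metric.closedBall pbar r := by
      rw [Metric.mem_closedBall, dist_eq_norm]
      have ht : ‖q - pbar‖ ≤ ‖q - phat‖ + ‖phat - pbar‖ := by
        have := norm_add_le (q - phat) (phat - pbar)
        rwa [sub_add_sub_cancel] at this
      linarith
    have hopt := hminK (q, bhat) ⟨⟨hq, hqball⟩, hbIcc⟩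
    rw [corePhi_def, corePhi_def] at hopt
    dsimp only at hopt
    have e1 : ‖q.fst - x‖ ^ 2 = ‖q.fst - phat.fst‖ ^ 2
        + 2 * ⟪q.fst - phat.fst, phat.fst - x⟫ + ‖phat.fst - x‖ ^ 2 := by
      rw [show q.fst - x = (q.fst - phat.fst) + (phat.fst - x) by abel, norm_add_sq_real]
    have e2 : ⟪v, q.fst - x⟫ = ⟪v, q.fst - phat.fst⟫ + ⟪v, phat.fst - x⟫ := by
      rw [← inner_add_right]
      congr 1
      abel
    have e3 : ⟪NV, q - phat⟫ = ⟪v, q.fst - phat.fst⟫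
        - 2 * kap * ⟪phat.fst - x, q.fst - phat.fst⟫
        + (-(2 * clam * (phat.snd - bhat)) - 2 * kap * phat.snd) * (q.snd - phat.snd) := by
      rw [aux_inner_prod, WithLp.sub_fst, WithLp.sub_snd, hNV_fst, hNV_snd]
      rw [inner_sub_left, real_inner_smul_left]
      try ring
    have e4 : ‖q - phat‖ ^ 2 = ‖q.fst - phat.fst‖ ^ 2 + (q.snd - phat.snd) ^ 2 := by
      have h := aux_norm_sq_prod (p := q - phat)
      rwa [WithLp.sub_fst, WithLp.sub_snd] at h
    have ec : ⟪q.fst - phat.fst, phat.fst - x⟫ = ⟪phat.fst - x, q.fst - phat.fst⟫ :=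
      real_inner_comm _ _
    have e1k : kap * ‖q.fst - x‖ ^ 2 = kap * ‖q.fst - phat.fst‖ ^ 2
        + 2 * kap * ⟪phat.fst - x, q.fst - phat.fst⟫ + kap * ‖phat.fst - x‖ ^ 2 := by
      rw [e1, ec]
      ring
    have id1 : clam * ((q.snd - bhat) ^ 2 - (phat.snd - bhat) ^ 2)
        - 2 * clam * (phat.snd - bhat) * (q.snd - phat.snd)
        = clam * (q.snd - phat.snd) ^ 2 := by ring
    have id2 : kap * (q.snd ^ 2 - phat.snd ^ 2) - 2 * kap * phat.snd * (q.snd - phat.snd)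
        = kap * (q.snd - phat.snd) ^ 2 := by ring
    rw [e3, e4]
    have hnn : (0:ℝ) ≤ clam * ‖q.fst - phat.fst‖ ^ 2 := by positivity
    linarith [hopt, e1k, e2, id1, id2, hnn]
  rcases eq_or_lt_of_le (aux_mem_epiSet.mp hpepi) with hcase | hcase
  · refine ⟨phat.fst, NV, by linarith, ?_, ?_, hNfst_bound, hNsnd_ub, hNsnd_lb⟩
    · rw [hcase]
      exact EReal.coe_ne_top _
    · have hbase : mkP phat.fst (g phat.fst).toReal = phat := by
        rw [hcase, EReal.toReal_coe]
        rfl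
      rw [hbase]
      exact aux_frechet_quad hpepi (by positivity) (by positivity) hquad
  · have hne_top : g phat.fst ≠ ⊤ := (hcase.trans_le le_top).ne
    obtain ⟨c0, hc0_def⟩ : ∃ c : ℝ, c = (g phat.fst).toReal := ⟨_, rfl⟩
    have hgc : g phat.fst = (c0 : EReal) := by
      rw [hc0_def]
      exact (EReal.coe_toReal hne_top (hgbot _)).symm
    have hc0lt : c0 < phat.snd := by
      rw [hgc] at hcase
      exact_mod_cast hcase
    obtain ⟨NH, hNH_def⟩ : ∃ N : WithLp 2 (EuclideanSpace ℝ (Fin n) × ℝ),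
        N = mkP (v - (2 * kap) • (phat.fst - x)) 0 := ⟨_, rfl⟩
    have hNH_fst : NH.fst = v - (2 * kap) • (phat.fst - x) := by rw [hNH_def]; rfl
    have hNH_snd : NH.snd = 0 := by rw [hNH_def]; rfl
    obtain ⟨b0, hb0_def⟩ : ∃ b : WithLp 2 (EuclideanSpace ℝ (Fin n) × ℝ),
        b = mkP phat.fst c0 := ⟨_, rfl⟩
    have hb0_fst : b0.fst = phat.fst := by rw [hb0_def]; rfl
    have hb0_snd : b0.snd = c0 := by rw [hb0_def]; rfl
    have hb0mem : b0 ∈ epiSet g := by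
      rw [aux_mem_epiSet, hb0_fst, hb0_snd, hgc]
    obtain ⟨ρ, hρ_def⟩ : ∃ p : ℝ, p = min ((phat.snd - c0) / 2) (r / 4) := ⟨_, rfl⟩
    have hρpos : 0 < ρ := by
      rw [hρ_def]
      exact lt_min (by linarith) (by linarith)
    have hρ1 : ρ ≤ (phat.snd - c0) / 2 := by rw [hρ_def]; exact min_le_left _ _
    have hρ2 : ρ ≤ r / 4 := by rw [hρ_def]; exact min_le_right _ _
    have hquadH : ∀ q ∈ epiSet g, ‖q - b0‖ ≤ ρ →
        ⟪NH, q - b0⟫ ≤ kap * ‖q - b0‖ ^ 2 := by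
      intro q hq hqρ
      have hqs : |q.snd - c0| ≤ ρ := by
        have h := aux_abs_snd_le (q - b0)
        rw [WithLp.sub_snd, hb0_snd] at h
        exact le_trans h hqρ
      have hqs2 : q.snd < phat.snd := by
        have h1 := (abs_le.mp hqs).2
        linarith
      have hqf : ‖q.fst - phat.fst‖ ≤ r / 4 := by
        have h := aux_norm_fst_le (q - b0)
        rw [WithLp.sub_fst, hb0_fst] at h
        exact le_trans h (le_trans hqρ hρ2)
      obtain ⟨q', hq'_def⟩ : ∃ p : WithLp 2 (EuclideanSpace ℝ (Fin n) × ℝ),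
          p = mkP q.fst phat.snd := ⟨_, rfl⟩
      have hq'fst : q'.fst = q.fst := by rw [hq'_def]; rfl
      have hq'snd : q'.snd = phat.snd := by rw [hq'_def]; rfl
      have hq'mem : q' ∈ epiSet g := by
        rw [aux_mem_epiSet, hq'fst, hq'snd]
        exact le_trans (aux_mem_epiSet.mp hq) (by exact_mod_cast hqs2.le)
      have hq'ball : q' ∈ Metric.closedBall pbar r := by
        rw [Metric.mem_closedBall, dist_eq_norm]
        have h := aux_norm_sq_prod (p := q' - pbar)
        rw [WithLp.sub_fst, WithLp.sub_snd, hpbar_fst, hpbar_snd, sub_zero,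
          hq'fst, hq'snd] at h
        have hfst : ‖q.fst - x‖ ≤ r / 2 := by
          have ht : ‖q.fst - x‖ ≤ ‖q.fst - phat.fst‖ + ‖phat.fst - x‖ := by
            have := norm_add_le (q.fst - phat.fst) (phat.fst - x)
            rwa [sub_add_sub_cancel] at this
          linarith
        have hfst2 : ‖q.fst - x‖ ^ 2 ≤ (r / 2) ^ 2 :=
          pow_le_pow_left₀ (norm_nonneg _) hfst 2
        have hsnd2 : phat.snd ^ 2 ≤ (r / 4) ^ 2 := by
          rw [← sq_abs]
          exact pow_le_pow_left₀ (abs_nonneg _) hs4 2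
        apply aux_le_of_sq_le_sq (norm_nonneg _) hrpos.le
        rw [h]
        linarith [hfst2, hsnd2, sq_nonneg r]
      have hopt := hminK (q', bhat) ⟨⟨hq'mem, hq'ball⟩, hbIcc⟩
      rw [corePhi_def, corePhi_def] at hopt
      dsimp only at hopt
      rw [hq'fst, hq'snd] at hopt
      have e1 : ‖q.fst - x‖ ^ 2 = ‖q.fst - phat.fst‖ ^ 2
          + 2 * ⟪q.fst - phat.fst, phat.fst - x⟫ + ‖phat.fst - x‖ ^ 2 := by
        rw [show q.fst - x = (q.fst - phat.fst) + (phat.fst - x) by abel, norm_add_sq_real]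
      have e2 : ⟪v, q.fst - x⟫ = ⟪v, q.fst - phat.fst⟫ + ⟪v, phat.fst - x⟫ := by
        rw [← inner_add_right]
        congr 1
        abel
      have e3 : ⟪NH, q - b0⟫ = ⟪v, q.fst - phat.fst⟫
          - 2 * kap * ⟪phat.fst - x, q.fst - phat.fst⟫ := by
        rw [aux_inner_prod, WithLp.sub_fst, WithLp.sub_snd, hNH_fst, hNH_snd, hb0_fst]
        rw [inner_sub_left, real_inner_smul_left]
        ring
      have ec : ⟪q.fst - phat.fst, phat.fst - x⟫ = ⟪phat.fst - x, q.fst - phat.fst⟫ :=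
        real_inner_comm _ _
      have e1k : kap * ‖q.fst - x‖ ^ 2 = kap * ‖q.fst - phat.fst‖ ^ 2
          + 2 * kap * ⟪phat.fst - x, q.fst - phat.fst⟫ + kap * ‖phat.fst - x‖ ^ 2 := by
        rw [e1, ec]
        ring
      have hfle : ‖q.fst - phat.fst‖ ^ 2 ≤ ‖q - b0‖ ^ 2 := by
        have h := aux_norm_fst_le (q - b0)
        rw [WithLp.sub_fst, hb0_fst] at h
        exact pow_le_pow_left₀ (norm_nonneg _) h 2
      have hkle := mul_le_mul_of_nonneg_left hfle hkap.le
      rw [e3]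
      linarith [hopt, e1k, e2, hkle]
    refine ⟨phat.fst, NH, by linarith, hne_top, ?_, ?_, ?_, ?_⟩
    · have hbase : mkP phat.fst (g phat.fst).toReal = b0 := by
        rw [hb0_def, hc0_def]
      rw [hbase]
      exact aux_frechet_quad hb0mem hρpos hkap.le hquadH
    · rw [hNH_fst]
      have hee : v - (2 * kap) • (phat.fst - x) - v = -((2 * kap) • (phat.fst - x)) := by abel
      rw [hee, norm_neg, norm_smul, Real.norm_eq_abs, abs_of_pos (by positivity)]
      have h := mul_le_mul_of_nonneg_left hy4 (le_of_lt (by positivity : (0:ℝ) < 2 * kap))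
      calc 2 * kap * ‖phat.fst - x‖ ≤ 2 * kap * (r / 4) := h
        _ = 16 * ε := by rw [hkap_def]; field_simp; ring
    · rw [hNH_snd]
      positivity
    · rw [hNH_snd]
      linarith

end Core

set_option maxHeartbeats 2000000 in
/-- Proposition 4.3: if `S = {x : g(x) ≤ 0}` has an error bound at
infinity then `N(∞;S) ⊆ (⋃_{λ>0} λ·∂g(∞)) ∪ ∂^∞g(∞)`. -/
theorem normalConeAtInfty_upper_estimate {n : ℕ} (g : EuclideanSpace ℝ (Fin n) → EReal)
    (hg : LowerSemicontinuous g) (hgbot : ∀ x, g x ≠ ⊥)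
    (hdomunbdd : ¬ Bornology.IsBounded {x | g x ≠ ⊤})
    (S : Set (EuclideanSpace ℝ (Fin n))) (hS : S = {x | g x ≤ 0})
    (hSne : S.Nonempty) (hScl : IsClosed S) (hSunbdd : ¬ Bornology.IsBounded S)
    (heb : ∃ α > (0:ℝ), ∃ R > (0:ℝ), ∀ x : EuclideanSpace ℝ (Fin n), R < ‖x‖ →
      (Metric.infDist x S : EReal) ≤ (α : EReal) * max (g x) 0) :
    NormalConeAtInfty S ⊆
      {w | ∃ lam : ℝ, 0 < lam ∧ ∃ u ∈ subInfty g, w = lam • u} ∪ singSubInfty g := by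
  obtain ⟨α, hα, R, hR, heb⟩ := heb
  have heb' : ∀ (z : EuclideanSpace ℝ (Fin n)) (s' : ℝ), g z ≤ (s' : EReal) → R < ‖z‖ →
      Metric.infDist z S ≤ α * max s' 0 := by
    intro z s' hz hzR
    have h1 := heb z hzR
    have h2 : max (g z) 0 ≤ ((max s' 0 : ℝ) : EReal) := by
      apply max_le
      · exact le_trans hz (by exact_mod_cast le_max_left s' 0)
      · exact_mod_cast le_max_right s' 0
    have h3 : (α : EReal) * max (g z) 0 ≤ ((α * max s' 0 : ℝ) : EReal) := by
      rw [EReal.coe_mul]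
      exact mul_le_mul_of_nonneg_left h2 (by exact_mod_cast hα.le)
    exact_mod_cast h1.trans h3
  have hgS : ∀ z ∈ S, g z ≤ 0 := by
    intro z hz
    rw [hS] at hz
    exact hz
  have hgSnetop : ∀ z ∈ S, g z ≠ ⊤ := by
    intro z hz
    exact ne_top_of_le_ne_top (by simp) (hgS z hz)
  intro w hw
  obtain ⟨xs, vs, hfre, hxnorm, hvs⟩ := hw
  by_cases hw0 : w = 0
  · right
    subst hw0
    have hpts : ∀ k : ℕ, ∃ z, z ∈ S ∧ (k : ℝ) < ‖z‖ := by
      intro k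
      by_contra hco
      push_neg at hco
      exact hSunbdd (isBounded_iff_forall_norm_le.mpr ⟨k, fun z hz => hco z hz⟩)
    choose zs hzsS hzsn using hpts
    refine ⟨zs, fun _ => 0, fun k => hgSnetop _ (hzsS k), ?_, ?_, ?_⟩
    · exact tendsto_atTop_mono (fun k => (hzsn k).le) tendsto_natCast_atTop_atTop
    · intro k
      apply aux_frechet_le_limiting
      apply aux_frechet_zero
      rw [aux_mem_epiSet, aux_mkP_fst, aux_mkP_snd]
      exact (EReal.coe_toReal (hgSnetop _ (hzsS k)) (hgbot _)).symm.le
    · exact tendsto_const_nhds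
  · have hm : 0 < ‖w‖ := norm_pos_iff.mpr hw0
    have hev1 : ∀ᶠ k in atTop, ‖w‖ / 2 < ‖vs k‖ :=
      (hvs.norm).eventually (eventually_gt_nhds (by linarith))
    have hev2 : ∀ᶠ k in atTop, R + 2 < ‖xs k‖ := hxnorm.eventually_gt_atTop (R + 2)
    obtain ⟨K0, hK0⟩ := Filter.eventually_atTop.mp (hev1.and hev2)
    have hKbig : ∀ k : ℕ, ‖w‖ / 2 < ‖vs (k + K0)‖ ∧ R + 2 < ‖xs (k + K0)‖ :=
      fun k => hK0 (k + K0) (Nat.le_add_left K0 k)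
    have hvpos : ∀ k, (0:ℝ) < ‖vs (k + K0)‖ :=
      fun k => lt_of_lt_of_le (by positivity) (hKbig k).1.le
    have hv1 : ∀ k, ‖(‖vs (k + K0)‖)⁻¹ • vs (k + K0)‖ = 1 := by
      intro k
      rw [norm_smul, norm_inv, norm_norm]
      exact inv_mul_cancel₀ (hvpos k).ne'
    have hvmem : ∀ k, (‖vs (k + K0)‖)⁻¹ • vs (k + K0) ∈ FrechetNormalCone S (xs (k + K0)) :=
      fun k => aux_frechet_smul (inv_pos.mpr (hvpos k)) (hfre _)
    have hcore : ∀ k : ℕ,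
        ∃ (y : EuclideanSpace ℝ (Fin n)) (N : WithLp 2 (EuclideanSpace ℝ (Fin n) × ℝ)),
          ‖y - xs (k + K0)‖ ≤ 1 ∧ g y ≠ ⊤ ∧
          N ∈ FrechetNormalCone (epiSet g) (mkP y (g y).toReal) ∧
          ‖N.fst - (‖vs (k + K0)‖)⁻¹ • vs (k + K0)‖ ≤ 16 * (1/((k:ℝ)+1)) ∧
          N.snd ≤ 16 * (1/((k:ℝ)+1)) ∧ -(6 * α) - 16 * (1/((k:ℝ)+1)) ≤ N.snd := by
      intro k
      have hk1 : (0:ℝ) < 1/((k:ℝ)+1) := by positivity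
      have hk2 : 1/((k:ℝ)+1) ≤ 1 := by
        rw [div_le_one (by positivity)]
        simp
      exact coreK g hg hgbot S hSne hScl α R hα heb' (xs (k + K0)) (hfre _).1
        (hgS _ (hfre _).1) (by linarith [(hKbig k).2]) _ (hv1 k) (hvmem k) _ hk1 hk2
    choose y N h1 h2 h3 h4 h5 h6 using hcore
    have hshift : Tendsto (fun k : ℕ => k + K0) atTop atTop := tendsto_add_atTop_nat K0
    have hxnorm' : Tendsto (fun k => ‖xs (k + K0)‖) atTop atTop := hxnorm.comp hshift
    have hynorm : Tendsto (fun k => ‖y k‖) atTop atTop := by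
      apply tendsto_atTop_mono _ (tendsto_atTop_add_const_right atTop (-1) hxnorm')
      intro k
      have ha := abs_norm_sub_norm_le (y k) (xs (k + K0))
      have hb := abs_le.mp ha
      linarith [h1 k, hb.1]
    have hvhat : Tendsto (fun k => (‖vs (k + K0)‖)⁻¹ • vs (k + K0)) atTop
        (𝓝 (‖w‖⁻¹ • w)) := by
      have hn : Tendsto (fun k => ‖vs (k + K0)‖) atTop (𝓝 ‖w‖) := (hvs.norm).comp hshift
      exact (hn.inv₀ hm.ne').smul (hvs.comp hshift)
    have hεlim : Tendsto (fun k : ℕ => 16 * (1/((k:ℝ)+1))) atTop (𝓝 0) := by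
      have h : Tendsto (fun n : ℕ => 1 / ((n : ℝ) + 1)) atTop (𝓝 0) :=
        tendsto_one_div_add_atTop_nhds_zero_nat
      have := h.const_mul (16:ℝ)
      simpa using this
    have hNfst : Tendsto (fun k => (N k).fst) atTop (𝓝 (‖w‖⁻¹ • w)) := by
      apply hvhat.congr_dist
      apply squeeze_zero (fun k => dist_nonneg) _ hεlim
      intro k
      rw [dist_comm, dist_eq_norm]
      exact h4 k
    have hbdd : ∀ k, (N k).snd ∈ Icc (-(6*α) - 16) (16:ℝ) := by
      intro k
      have hk1 : (0:ℝ) < 1/((k:ℝ)+1) := by positivity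
      have hk2 : 1/((k:ℝ)+1) ≤ 1 := by
        rw [div_le_one (by positivity)]
        simp
      exact ⟨by linarith [h6 k], by linarith [h5 k]⟩
    obtain ⟨a, haI, φ, hφ, hconv⟩ :=
      tendsto_subseq_of_bounded (Metric.isBounded_Icc (-(6*α) - 16) (16:ℝ)) hbdd
    have ha0 : a ≤ 0 := by
      apply le_of_tendsto_of_tendsto' hconv hεlim
      intro k
      have hφk : (k:ℝ) ≤ (φ k : ℝ) := by exact_mod_cast hφ.le_apply
      have hmono : 1/((φ k : ℝ)+1) ≤ 1/((k:ℝ)+1) :=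
        one_div_le_one_div_of_le (by positivity) (by linarith)
      calc ((fun k => (N k).snd) ∘ φ) k ≤ 16 * (1/((φ k:ℝ)+1)) := h5 (φ k)
        _ ≤ 16 * (1/((k:ℝ)+1)) := by linarith
    have hNfstφ : Tendsto (fun k => (N (φ k)).fst) atTop (𝓝 (‖w‖⁻¹ • w)) :=
      hNfst.comp hφ.tendsto_atTop
    have hynormφ : Tendsto (fun k => ‖y (φ k)‖) atTop atTop := hynorm.comp hφ.tendsto_atTop
    by_cases ha : a = 0
    · right
      refine ⟨fun k => y (φ k), fun k => ‖w‖ • N (φ k), fun k => h2 _, hynormφ, ?_, ?_⟩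
      · intro k
        exact aux_frechet_le_limiting (aux_frechet_smul hm (h3 (φ k)))
      · have hfst : Tendsto (fun k => ‖w‖ • (N (φ k)).fst) atTop (𝓝 w) := by
          have h := hNfstφ.const_smul ‖w‖
          rwa [smul_inv_smul₀ hm.ne'] at h
        have hsnd : Tendsto (fun k => ‖w‖ * (N (φ k)).snd) atTop (𝓝 0) := by
          have h := hconv.const_mul ‖w‖
          rw [ha, mul_zero] at h
          exact h
        exact (hfst.prodMk_nhds hsnd).congr fun k => rfl
    · have haneg : a < 0 := lt_of_le_of_ne ha0 ha
      have hν : (0:ℝ) < -a := by linarith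
      left
      refine ⟨(-a) * ‖w‖, by positivity, (-a)⁻¹ • (‖w‖⁻¹ • w), ?_, ?_⟩
      · refine ⟨fun k => y (φ k), fun k => (-a)⁻¹ • N (φ k), fun k => h2 _, hynormφ, ?_, ?_⟩
        · intro k
          exact aux_frechet_le_limiting (aux_frechet_smul (inv_pos.mpr hν) (h3 (φ k)))
        · have hfst : Tendsto (fun k => (-a)⁻¹ • (N (φ k)).fst) atTop
              (𝓝 ((-a)⁻¹ • (‖w‖⁻¹ • w))) := hNfstφ.const_smul _
          have hsnd : Tendsto (fun k => (-a)⁻¹ * (N (φ k)).snd) atTop (𝓝 (-1)) := by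
            have h := hconv.const_mul (-a)⁻¹
            have he : (-a)⁻¹ * a = -1 := by field_simp
            rw [he] at h
            exact h
          exact (hfst.prodMk_nhds hsnd).congr fun k => rfl
      · rw [smul_smul, smul_smul]
        rw [show -a * ‖w‖ * (-a)⁻¹ * ‖w‖⁻¹ = 1 by field_simp, one_smul]
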